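/- Let K be an algebraically closed field with char(K) ≠ 2, g a positive integer, and α_1, …, α_{2g+1} pairwise distinct elements of K. Let a, b ∈ K satisfy b^2 = ∏_{i=1}^{2g+1}(a − α_i). Let ε = (ε_1, …, ε_{2g+1}) ∈ {1, −1}^{2g+1} with ∏_{i=1}^{2g+1} ε_i = 1. If for every tuple (r_1, …, r_{2g+1}) ∈ K^{2g+1} satisfying r_i^2 = a − α_i for all i and ∏_{i=1}^{2g+1} r_i = −b one has ε_i·r_i = r_i for all i, then ε_i = 1 for all i. -/
import Mathlib


/-- Let `K` be algebraically closed with `char K ≠ 2`, `g ≥ 1`,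
`α i` pairwise distinct, and `a, b ∈ K` with `b² = ∏ (a - α i)`.  Let `ε` be a
vector of signs `±1` with `∏ ε i = 1`.  If `ε` fixes every tuple
`(r 1, …, r (2g+1))` of square roots `r i² = a - α i` with `∏ r i = -b`
(coordinatewise, `ε i * r i = r i`), then `ε i = 1` for all `i`. -/
theorem sign_vector_fixing_fiber_is_trivial
    {K : Type*} [Field K] [IsAlgClosed K] (hK : ringChar K ≠ 2)
    (g : ℕ) (hg : 0 < g) (α : Fin (2 * g + 1) → K) (hα : Function.Injective α)
    (a b : K) (hab : b ^ 2 = ∏ i, (a - α i))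
    (ε : Fin (2 * g + 1) → K) (hε : ∀ i, ε i = 1 ∨ ε i = -1)
    (hεprod : ∏ i, ε i = 1)
    (hfix : ∀ r : Fin (2 * g + 1) → K,
      (∀ i, r i ^ 2 = a - α i) → (∏ i, r i) = -b → ∀ i, ε i * r i = r i) :
    ∀ i, ε i = 1 := by
  have two_ne : (2 : K) ≠ 0 := Ring.two_ne_zero hK
  have hsex : ∀ i : Fin (2 * g + 1), ∃ s : K, s ^ 2 = a - α i := fun i =>
    IsAlgClosed.exists_pow_nat_eq (a - α i) (n := 2) two_pos
  choose s hs using hsex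
  -- key: for any valid fiber point r, ε i = 1 whenever r i ≠ 0
  have key : ∀ r : Fin (2 * g + 1) → K, (∀ i, r i ^ 2 = a - α i) → (∏ i, r i) = -b →
      ∀ i, r i ≠ 0 → ε i = 1 := by
    intro r h1 h2 i hri
    have hf := hfix r h1 h2 i
    rcases hε i with h | h
    · exact h
    · exfalso
      rw [h] at hf
      have : (2 : K) * r i = 0 := by linear_combination -hf
      rcases mul_eq_zero.mp this with h2' | h2'
      · exact two_ne h2'
      · exact hri h2'
  by_cases hz : ∃ j, a - α j = 0
  · obtain ⟨j, hj⟩ := hz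
    have hsj : s j = 0 := by
      have := hs j; rw [hj] at this; exact pow_eq_zero_iff (by norm_num) |>.mp this
    have hb : b = 0 := by
      have : b ^ 2 = 0 := by
        rw [hab]; exact Finset.prod_eq_zero (Finset.mem_univ j) hj
      exact pow_eq_zero_iff (by norm_num) |>.mp this
    have hprod : (∏ i, s i) = -b := by
      rw [hb, neg_zero]
      exact Finset.prod_eq_zero (Finset.mem_univ j) hsj
    have hne : ∀ i, i ≠ j → ε i = 1 := by
      intro i hij
      refine key s hs hprod i fun h0 => hij (hα ?_)
      have h1 := hs i
      rw [h0] at h1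
      linear_combination hj + h1
    intro i
    rcases eq_or_ne i j with hij | hij
    · subst hij
      have herase : ∏ x ∈ Finset.univ.erase i, ε x = 1 :=
        Finset.prod_eq_one fun x hx => hne x (Finset.mem_erase.mp hx).1
      have := Finset.mul_prod_erase Finset.univ ε (Finset.mem_univ i)
      rw [herase, mul_one] at this
      rw [this, hεprod]
    · exact hne i hij
  · push_neg at hz
    have hsne : ∀ i, s i ≠ 0 := by
      intro i h0
      apply hz i
      rw [← hs i, h0]; ring
    have hsq : ((∏ i, s i) - b) * ((∏ i, s i) + b) = 0 := by
      have : (∏ i, s i) ^ 2 = b ^ 2 := by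
        rw [hab, ← Finset.prod_pow]
        exact Finset.prod_congr rfl fun i _ => hs i
      linear_combination this
    rcases mul_eq_zero.mp hsq with h | h
    · -- ∏ s = b ; flip the sign at index 0
      have hpb : (∏ i, s i) = b := by linear_combination h
      set r : Fin (2 * g + 1) → K := Function.update s 0 (-(s 0)) with hr
      have hr0 : r 0 = -(s 0) := Function.update_self _ _ _
      have hrne : ∀ i, i ≠ 0 → r i = s i := fun i hi => Function.update_of_ne hi _ _
      have h1 : ∀ i, r i ^ 2 = a - α i := by
        intro i
        rcases eq_or_ne i 0 with rfl | hi
        · rw [hr0]; rw [← hs 0]; ring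
        · rw [hrne i hi]; exact hs i
      have h2 : (∏ i, r i) = -b := by
        rw [← Finset.mul_prod_erase Finset.univ r (Finset.mem_univ 0), hr0]
        have herase : ∏ x ∈ Finset.univ.erase 0, r x = ∏ x ∈ Finset.univ.erase 0, s x :=
          Finset.prod_congr rfl fun x hx => hrne x (Finset.mem_erase.mp hx).1
        rw [herase]
        have := Finset.mul_prod_erase Finset.univ s (Finset.mem_univ 0)
        rw [hpb] at this
        linear_combination -this
      refine fun i => key r h1 h2 i ?_
      rcases eq_or_ne i 0 with rfl | hi
      · rw [hr0]; exact neg_ne_zero.mpr (hsne 0)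
      · rw [hrne i hi]; exact hsne i
    · have hpb : (∏ i, s i) = -b := by linear_combination h
      exact fun i => key s hs hpb i (hsne i)
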